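/- arXiv:1912.09290 — 6 statements merged into one kernel-verified Lean document; each statement's English description precedes it below -/
import Mathlib

section
/- If there are infinitely many integers x ≥ 0 such that T_x contains seven primes, then for each k ∈ {2, 4, 6} there are infinitely many pairs of primes p, p' with p' − p = k. -/
/-- The set `S` of positive integers less than 30 and coprime to 30. -/
def S : Finset ℕ := {1, 7, 11, 13, 17, 19, 23, 29}

/-- `T x` is the set `{30x + i : i ∈ S}`. -/
def T (x : ℕ) : Finset ℕ := S.image (fun i => 30 * x + i)

lemma memT (x i : ℕ) (hi : i ∈ S) : 30 * x + i ∈ T x :=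
  Finset.mem_image.mpr ⟨i, hi, rfl⟩

lemma cardT (x : ℕ) : (T x).card = 8 := by
  rw [T, Finset.card_image_of_injective _ (fun a b hab => by omega)]
  decide

lemma two_nonprimes (x a b : ℕ) (ha : a ∈ T x) (hb : b ∈ T x) (hab : a ≠ b)
    (hpa : ¬ a.Prime) (hpb : ¬ b.Prime) :
    ((T x).filter Nat.Prime).card ≤ 6 := by
  have hsub : (T x).filter Nat.Prime ⊆ ((T x).erase a).erase b := by
    intro c hc
    rw [Finset.mem_filter] at hc
    refine Finset.mem_erase.mpr ⟨fun hcb => hpb (hcb ▸ hc.2), Finset.mem_erase.mpr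
      ⟨fun hca => hpa (hca ▸ hc.2), hc.1⟩⟩
  have h1 : (((T x).erase a).erase b).card ≤ 6 := by
    have hb' : b ∈ (T x).erase a := Finset.mem_erase.mpr ⟨hab.symm, hb⟩
    rw [Finset.card_erase_of_mem hb', Finset.card_erase_of_mem ha, cardT]
  exact le_trans (Finset.card_le_card hsub) h1

lemma exists_pair (k : ℕ) (hk : k = 2 ∨ k = 4 ∨ k = 6) (x : ℕ)
    (hx : 7 ≤ ((T x).filter Nat.Prime).card) :
    ∃ p, 30 * x < p ∧ p < 30 * (x + 1) ∧ p.Prime ∧ (p + k).Prime := by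
  rcases hk with rfl | rfl | rfl
  · by_cases h1 : (30 * x + 11).Prime ∧ (30 * x + 13).Prime
    · exact ⟨30 * x + 11, by omega, by omega, h1.1, by
        have : 30 * x + 11 + 2 = 30 * x + 13 := by ring
        rw [this]; exact h1.2⟩
    by_cases h2 : (30 * x + 17).Prime ∧ (30 * x + 19).Prime
    · exact ⟨30 * x + 17, by omega, by omega, h2.1, by
        have : 30 * x + 17 + 2 = 30 * x + 19 := by ring
        rw [this]; exact h2.2⟩
    exfalso
    rw [not_and_or] at h1 h2
    rcases h1 with h1 | h1 <;> rcases h2 with h2 | h2 <;>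
    · have := two_nonprimes x _ _ (memT x _ (by decide)) (memT x _ (by decide))
        (by omega) h1 h2
      omega
  · by_cases h1 : (30 * x + 7).Prime ∧ (30 * x + 11).Prime
    · exact ⟨30 * x + 7, by omega, by omega, h1.1, by
        have : 30 * x + 7 + 4 = 30 * x + 11 := by ring
        rw [this]; exact h1.2⟩
    by_cases h2 : (30 * x + 13).Prime ∧ (30 * x + 17).Prime
    · exact ⟨30 * x + 13, by omega, by omega, h2.1, by
        have : 30 * x + 13 + 4 = 30 * x + 17 := by ring
        rw [this]; exact h2.2⟩
    exfalso
    rw [not_and_or] at h1 h2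
    rcases h1 with h1 | h1 <;> rcases h2 with h2 | h2 <;>
    · have := two_nonprimes x _ _ (memT x _ (by decide)) (memT x _ (by decide))
        (by omega) h1 h2
      omega
  · by_cases h1 : (30 * x + 1).Prime ∧ (30 * x + 7).Prime
    · exact ⟨30 * x + 1, by omega, by omega, h1.1, by
        have : 30 * x + 1 + 6 = 30 * x + 7 := by ring
        rw [this]; exact h1.2⟩
    by_cases h2 : (30 * x + 11).Prime ∧ (30 * x + 17).Prime
    · exact ⟨30 * x + 11, by omega, by omega, h2.1, by
        have : 30 * x + 11 + 6 = 30 * x + 17 := by ring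
        rw [this]; exact h2.2⟩
    exfalso
    rw [not_and_or] at h1 h2
    rcases h1 with h1 | h1 <;> rcases h2 with h2 | h2 <;>
    · have := two_nonprimes x _ _ (memT x _ (by decide)) (memT x _ (by decide))
        (by omega) h1 h2
      omega

theorem seven_prime_sets_imply_polignac
    (h : {x : ℕ | 7 ≤ ((T x).filter Nat.Prime).card}.Infinite) :
    ∀ k ∈ ({2, 4, 6} : Finset ℕ),
      {q : ℕ × ℕ | q.1.Prime ∧ q.2.Prime ∧ q.2 = q.1 + k}.Infinite := by
  intro k hk
  have hk' : k = 2 ∨ k = 4 ∨ k = 6 := by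
    simpa using hk
  classical
  have key : ∀ x ∈ {x : ℕ | 7 ≤ ((T x).filter Nat.Prime).card},
      ∃ p, 30 * x < p ∧ p < 30 * (x + 1) ∧ p.Prime ∧ (p + k).Prime :=
    fun x hx => exists_pair k hk' x hx
  choose! f hf1 hf2 hf3 hf4 using key
  have hinj : Set.InjOn (fun x => (f x, f x + k))
      {x : ℕ | 7 ≤ ((T x).filter Nat.Prime).card} := by
    intro x hx y hy hxy
    simp only [Prod.mk.injEq] at hxy
    have h1 := hf1 x hx; have h2 := hf2 x hx
    have h3 := hf1 y hy; have h4 := hf2 y hy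
    omega
  have himg := (h.image hinj)
  apply himg.mono
  rintro ⟨p, q⟩ ⟨x, hx, hq⟩
  simp only [Prod.mk.injEq] at hq
  obtain ⟨rfl, rfl⟩ := hq
  exact ⟨hf3 x hx, hf4 x hx, rfl⟩
end

section
/- The function m ↦ φ₃(30m) is multiplicative: for all positive integers m and n with gcd(m, n) = 1, φ₃(30mn) = φ₃(30m)·φ₃(30n). -/
/-- `phi3 m` is the number of integers `x` with `0 ≤ x ≤ m - 1` such that
`gcd (m, 30x + i) = 1` for all `i ∈ S`; in the paper's notation this is `φ₃(30m)`. -/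
def phi3 (m : ℕ) : ℕ :=
  ((Finset.range m).filter (fun x => ∀ i ∈ S, Nat.gcd m (30 * x + i) = 1)).card

open scoped Classical

lemma prod_isUnit_iff {M N : Type*} [Monoid M] [Monoid N] (p : M × N) :
    IsUnit p ↔ IsUnit p.1 ∧ IsUnit p.2 := by
  constructor
  · intro hp
    exact ⟨hp.map (MonoidHom.fst M N), hp.map (MonoidHom.snd M N)⟩
  · rintro ⟨⟨u, hu⟩, ⟨v, hv⟩⟩
    exact ⟨⟨(u.val, v.val), (u.inv, v.inv), by ext <;> simp [u.val_inv, v.val_inv],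
      by ext <;> simp [u.inv_val, v.inv_val]⟩, by simp [hu, hv]⟩

def Pm (m : ℕ) (x : ZMod m) : Prop := ∀ i ∈ S, IsUnit (30 * x + (i : ZMod m))

lemma phi3_eq (m : ℕ) (hm : 0 < m) :
    haveI : NeZero m := ⟨hm.ne'⟩
    phi3 m = (Finset.univ.filter (Pm m)).card := by
  haveI : NeZero m := ⟨hm.ne'⟩
  unfold phi3
  refine Finset.card_bij (fun x _ => (x : ZMod m)) ?_ ?_ ?_
  · intro x hx
    simp only [Finset.mem_filter, Finset.mem_range, Finset.mem_univ, true_and] at hx ⊢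
    intro i hi
    have h1 : Nat.Coprime (30 * x + i) m := Nat.coprime_comm.mp (hx.2 i hi)
    have h2 := (ZMod.isUnit_iff_coprime (30 * x + i) m).mpr h1
    push_cast at h2
    exact h2
  · intro a ha b hb hab
    simp only [Finset.mem_filter, Finset.mem_range] at ha hb
    have := (ZMod.natCast_eq_natCast_iff' a b m).mp hab
    rwa [Nat.mod_eq_of_lt ha.1, Nat.mod_eq_of_lt hb.1] at this
  · intro y hy
    simp only [Finset.mem_filter, Finset.mem_univ, true_and] at hy
    refine ⟨y.val, ?_, ?_⟩
    · simp only [Finset.mem_filter, Finset.mem_range]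
      refine ⟨ZMod.val_lt y, fun i hi => ?_⟩
      have hu : IsUnit (((30 * y.val + i : ℕ) : ZMod m)) := by
        push_cast
        rw [ZMod.natCast_val, ZMod.cast_id]
        exact hy i hi
      exact Nat.coprime_comm.mp ((ZMod.isUnit_iff_coprime _ m).mp hu)
    · simp [ZMod.natCast_val, ZMod.cast_id]

theorem phi3_multiplicative (m n : ℕ) (hm : 0 < m) (hn : 0 < n)
    (h : Nat.gcd m n = 1) : phi3 (m * n) = phi3 m * phi3 n := by
  haveI : NeZero m := ⟨hm.ne'⟩
  haveI : NeZero n := ⟨hn.ne'⟩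
  haveI : NeZero (m * n) := ⟨Nat.mul_ne_zero hm.ne' hn.ne'⟩
  rw [phi3_eq m hm, phi3_eq n hn, phi3_eq (m * n) (Nat.mul_pos hm hn),
    ← Finset.card_product]
  have hco : Nat.Coprime m n := h
  let e := ZMod.chineseRemainder hco
  have key : ∀ (x : ZMod (m * n)) (i : ℕ),
      e (30 * x + (i : ZMod (m * n))) = (30 * (e x).1 + (i : ZMod m),
        30 * (e x).2 + (i : ZMod n)) := by
    intro x i
    have h30 : e (30 * x + (i : ZMod (m * n))) = 30 * e x + (i : ZMod m × ZMod n) := by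
      rw [map_add, map_mul, map_natCast, map_ofNat]
    rw [h30]
    rfl
  refine Finset.card_bij (fun x _ => e x) ?_ ?_ ?_
  · intro x hx
    simp only [Finset.mem_filter, Finset.mem_univ, true_and, Finset.mem_product] at hx ⊢
    constructor
    · intro i hi
      have hh := (hx i hi).map e
      rw [key] at hh
      exact ((prod_isUnit_iff _).mp hh).1
    · intro i hi
      have hh := (hx i hi).map e
      rw [key] at hh
      exact ((prod_isUnit_iff _).mp hh).2
  · intro a _ b _ hab
    exact e.injective hab
  · intro p hp
    simp only [Finset.mem_filter, Finset.mem_univ, true_and, Finset.mem_product] at hp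
    refine ⟨e.symm p, ?_, (e.apply_symm_apply p)⟩
    simp only [Finset.mem_filter, Finset.mem_univ, true_and]
    intro i hi
    have hh : IsUnit (e (30 * e.symm p + (i : ZMod (m * n)))) := by
      rw [key, e.apply_symm_apply]
      exact (prod_isUnit_iff _).mpr ⟨hp.1 i hi, hp.2 i hi⟩
    have := hh.map e.symm
    rwa [e.symm_apply_apply] at this
end

section
/- Let m > 1 have prime factorization m = 2^{k₁}·3^{k₂}·5^{k₃}·11^{k₄}·p₅^{k₅}·…·p_r^{k_r}, where k₁, k₂, k₃ ≥ 0, k₄ ≥ 1, the p_s (s ≥ 5) are distinct primes ≥ 13 (in particular none equals 7), and k_s ≥ 1 for s ≥ 5. Then φ₃(30m) = 2^{k₁}·3^{k₂}·5^{k₃}·(11^{k₄} − 6·11^{k₄−1})·(p₅^{k₅} − 8·p₅^{k₅−1})·…·(p_r^{k_r} − 8·p_r^{k_r−1}). -/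
lemma card_filter_range_mul (P : ℕ → Prop) [DecidablePred P] (d : ℕ)
    (hP : ∀ x, P (x + d) ↔ P x) (c : ℕ) :
    ((Finset.range (c * d)).filter P).card = c * ((Finset.range d).filter P).card := by
  have key : ∀ c x, P (c * d + x) ↔ P x := by
    intro c x
    induction c with
    | zero => simp
    | succ c ih2 =>
      have h : (c + 1) * d + x = (c * d + x) + d := by ring
      rw [h, hP, ih2]
  induction c with
  | zero => simp
  | succ c ih =>
    have hd : Disjoint ((Finset.range (c * d)).filter P)
        (((Finset.range d).map (addLeftEmbedding (c * d))).filter P) := by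
      rw [Finset.disjoint_left]
      intro a ha hb
      simp only [Finset.mem_filter, Finset.mem_range, Finset.mem_map,
        addLeftEmbedding_apply] at ha hb
      obtain ⟨⟨y, hy, rfl⟩, -⟩ := hb
      omega
    have hcard : (((Finset.range d).map (addLeftEmbedding (c * d))).filter P).card
        = ((Finset.range d).filter P).card := by
      rw [Finset.filter_map, Finset.card_map]
      congr 1
      apply Finset.filter_congr
      intro x _
      simpa using key c x
    rw [add_mul, one_mul, Finset.range_add, Finset.filter_union,
      Finset.card_union_of_disjoint hd, ih, hcard]
    ring

lemma gcd_shift (a x i : ℕ) : Nat.gcd a (30 * x + i) = Nat.gcd a (30 * (x % a) + i) := by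
  conv_lhs => rw [← Nat.mod_add_div x a]
  rw [show 30 * (x % a + a * (x / a)) + i = 30 * (x % a) + i + (30 * (x / a)) * a by ring,
    Nat.gcd_add_mul_right_right]

lemma phi3_one : phi3 1 = 1 := by decide

lemma phi3_pow (p k : ℕ) (hk : 1 ≤ k) : phi3 (p ^ k) = p ^ (k - 1) * phi3 p := by
  unfold phi3
  have h1 : ∀ x ∈ Finset.range (p ^ k),
      (∀ i ∈ S, Nat.gcd (p ^ k) (30 * x + i) = 1) ↔
      (∀ i ∈ S, Nat.gcd p (30 * x + i) = 1) := by
    intro x _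
    constructor <;> intro h i hi
    · exact (Nat.coprime_pow_left_iff hk _ _).mp (h i hi)
    · exact (Nat.coprime_pow_left_iff hk _ _).mpr (h i hi)
  rw [Finset.filter_congr h1]
  have hper : ∀ x, (∀ i ∈ S, Nat.gcd p (30 * (x + p) + i) = 1) ↔
      (∀ i ∈ S, Nat.gcd p (30 * x + i) = 1) := by
    intro x
    have : ∀ i, Nat.gcd p (30 * (x + p) + i) = Nat.gcd p (30 * x + i) := by
      intro i
      rw [show 30 * (x + p) + i = 30 * x + i + 30 * p by ring, Nat.gcd_add_mul_right_right]
    constructor <;> intro h i hi <;> [rw [← this i]; rw [this i]] <;> exact h i hi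
  have hpk : p ^ k = p ^ (k - 1) * p := by
    rw [← pow_succ]; congr 1; omega
  rw [hpk, card_filter_range_mul _ p hper]

lemma phi3_mul (a b : ℕ) (h : Nat.Coprime a b) : phi3 (a * b) = phi3 a * phi3 b := by
  rcases Nat.eq_zero_or_pos a with rfl | ha
  · have hb : b = 1 := Nat.coprime_zero_left b |>.mp h
    subst hb; simp [phi3]
  rcases Nat.eq_zero_or_pos b with rfl | hb
  · have ha' : a = 1 := Nat.coprime_zero_right a |>.mp h
    subst ha'; simp [phi3]
  unfold phi3
  rw [← Finset.card_product]
  rw [← Finset.filter_product]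
  apply Finset.card_bij' (fun x _ => ((x % a : ℕ), (x % b : ℕ)))
    (fun y _ => (Nat.chineseRemainder h y.1 y.2 : ℕ) % (a * b))
  · -- hi : forward membership
    intro x hx
    simp only [Finset.mem_filter, Finset.mem_range, Finset.mem_product] at hx ⊢
    obtain ⟨hxlt, hxP⟩ := hx
    refine ⟨⟨Nat.mod_lt _ ha, Nat.mod_lt _ hb⟩, ?_, ?_⟩ <;> intro i hi
    · rw [← gcd_shift]
      exact ((Nat.coprime_mul_iff_left).mp (hxP i hi)).1
    · rw [← gcd_shift]
      exact ((Nat.coprime_mul_iff_left).mp (hxP i hi)).2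
  · -- hj : backward membership
    intro y hy
    simp only [Finset.mem_filter, Finset.mem_range, Finset.mem_product] at hy ⊢
    obtain ⟨⟨hy1, hy2⟩, hP1, hP2⟩ := hy
    set z := (Nat.chineseRemainder h y.1 y.2 : ℕ) % (a * b) with hz
    have hab : 0 < a * b := Nat.mul_pos ha hb
    have hza : z % a = y.1 := by
      have h1 : z % a = (Nat.chineseRemainder h y.1 y.2 : ℕ) % a := by
        rw [hz, Nat.mod_mod_of_dvd _ ⟨b, rfl⟩]
      rw [h1, (Nat.chineseRemainder h y.1 y.2).2.1, Nat.mod_eq_of_lt hy1]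
    have hzb : z % b = y.2 := by
      have h1 : z % b = (Nat.chineseRemainder h y.1 y.2 : ℕ) % b := by
        rw [hz, Nat.mod_mod_of_dvd _ ⟨a, Nat.mul_comm a b⟩]
      rw [h1, (Nat.chineseRemainder h y.1 y.2).2.2, Nat.mod_eq_of_lt hy2]
    refine ⟨Nat.mod_lt _ hab, ?_⟩
    intro i hi
    have c1 : Nat.Coprime a (30 * z + i) := by
      have hg : Nat.gcd a (30 * z + i) = Nat.gcd a (30 * y.1 + i) := by rw [gcd_shift, hza]
      show Nat.gcd a (30 * z + i) = 1
      rw [hg]; exact hP1 i hi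
    have c2 : Nat.Coprime b (30 * z + i) := by
      have hg : Nat.gcd b (30 * z + i) = Nat.gcd b (30 * y.2 + i) := by rw [gcd_shift, hzb]
      show Nat.gcd b (30 * z + i) = 1
      rw [hg]; exact hP2 i hi
    exact Nat.coprime_mul_iff_left.mpr ⟨c1, c2⟩
  · -- left inverse
    intro x hx
    simp only [Finset.mem_filter, Finset.mem_range] at hx
    have hmod : (Nat.chineseRemainder h (x % a) (x % b) : ℕ) ≡ x [MOD a * b] := by
      rw [← Nat.modEq_and_modEq_iff_modEq_mul h]
      exact ⟨(Nat.chineseRemainder h (x % a) (x % b)).2.1.trans (Nat.mod_modEq x a),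
        (Nat.chineseRemainder h (x % a) (x % b)).2.2.trans (Nat.mod_modEq x b)⟩
    calc (Nat.chineseRemainder h (x % a) (x % b) : ℕ) % (a * b)
        = x % (a * b) := hmod
      _ = x := Nat.mod_eq_of_lt hx.1
  · -- right inverse
    intro y hy
    simp only [Finset.mem_filter, Finset.mem_range, Finset.mem_product] at hy
    obtain ⟨⟨hy1, hy2⟩, -, -⟩ := hy
    have hza : ((Nat.chineseRemainder h y.1 y.2 : ℕ) % (a * b)) % a = y.1 := by
      rw [Nat.mod_mod_of_dvd _ ⟨b, rfl⟩, (Nat.chineseRemainder h y.1 y.2).2.1,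
        Nat.mod_eq_of_lt hy1]
    have hzb : ((Nat.chineseRemainder h y.1 y.2 : ℕ) % (a * b)) % b = y.2 := by
      rw [Nat.mod_mod_of_dvd _ ⟨a, Nat.mul_comm a b⟩, (Nat.chineseRemainder h y.1 y.2).2.2,
        Nat.mod_eq_of_lt hy2]
    exact Prod.ext hza hzb

lemma S_lt_30 : ∀ i ∈ S, i < 30 := by decide

lemma S_card : S.card = 8 := by decide

lemma cast_injOn_S (p : ℕ) (hp : p.Prime) (h13 : 13 ≤ p) :
    ∀ i ∈ S, ∀ j ∈ S, (i : ZMod p) = (j : ZMod p) → i = j := by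
  intro i hi j hj hij
  rw [ZMod.natCast_eq_natCast_iff'] at hij
  rcases le_or_gt 30 p with h30 | h30
  · rwa [Nat.mod_eq_of_lt (lt_of_lt_of_le (S_lt_30 i hi) h30),
      Nat.mod_eq_of_lt (lt_of_lt_of_le (S_lt_30 j hj) h30)] at hij
  · interval_cases p <;> first
      | (revert hij; fin_cases hi <;> fin_cases hj <;> decide)
      | exact absurd hp (by norm_num)

lemma phi3_prime_large (p : ℕ) (hp : p.Prime) (h13 : 13 ≤ p) : phi3 p = p - 8 := by
  haveI : Fact p.Prime := ⟨hp⟩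
  haveI : NeZero p := ⟨hp.pos.ne'⟩
  have h30 : ¬ p ∣ 30 := by
    intro hdvd
    have hle := Nat.le_of_dvd (by norm_num) hdvd
    interval_cases p <;> first
      | (revert hdvd; decide)
      | exact absurd hp (by norm_num)
  have h30z : (30 : ZMod p) ≠ 0 := by
    intro h0
    apply h30
    have h0' : ((30 : ℕ) : ZMod p) = 0 := by push_cast; exact h0
    exact (ZMod.natCast_eq_zero_iff 30 p).mp h0'
  set c : ZMod p := (30 : ZMod p)⁻¹ with hcdef
  have hc : (30 : ZMod p) * c = 1 := mul_inv_cancel₀ h30z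
  have hkey : ∀ i x : ℕ, x < p → (p ∣ 30 * x + i ↔ x = ((-(i : ZMod p)) * c).val) := by
    intro i x hx
    constructor
    · intro hdvd
      have h0 : ((30 * x + i : ℕ) : ZMod p) = 0 :=
        (ZMod.natCast_eq_zero_iff _ p).mpr hdvd
      push_cast at h0
      have h1 : (30 : ZMod p) * (x : ZMod p) = -(i : ZMod p) := by
        linear_combination h0
      have hX : (x : ZMod p) = (-(i : ZMod p)) * c := by
        calc (x : ZMod p) = (x : ZMod p) * ((30 : ZMod p) * c) := by rw [hc, mul_one]
          _ = ((30 : ZMod p) * (x : ZMod p)) * c := by ring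
          _ = (-(i : ZMod p)) * c := by rw [h1]
      rw [← ZMod.val_cast_of_lt hx, hX]
    · intro hxe
      subst hxe
      rw [← ZMod.natCast_eq_zero_iff]
      push_cast
      rw [ZMod.natCast_zmod_val]
      rw [show (30 : ZMod p) * ((-(i : ZMod p)) * c) + (i : ZMod p)
          = (-(i : ZMod p)) * ((30 : ZMod p) * c) + (i : ZMod p) by ring, hc, mul_one]
      ring
  have hgood : (Finset.range p).filter (fun x => ∀ i ∈ S, Nat.gcd p (30 * x + i) = 1)
      = Finset.range p \ S.image (fun i : ℕ => ((-(i : ZMod p)) * c).val) := by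
    ext x
    simp only [Finset.mem_filter, Finset.mem_sdiff, Finset.mem_range, Finset.mem_image]
    constructor
    · rintro ⟨hx, hP⟩
      refine ⟨hx, ?_⟩
      rintro ⟨i, hi, hxe⟩
      have h2 : ¬ p ∣ (30 * x + i) := (Nat.Prime.coprime_iff_not_dvd hp).mp (hP i hi)
      exact h2 ((hkey i x hx).mpr hxe.symm)
    · rintro ⟨hx, hIm⟩
      refine ⟨hx, fun i hi => ?_⟩
      refine (Nat.Prime.coprime_iff_not_dvd hp).mpr ?_
      intro hdvd
      exact hIm ⟨i, hi, ((hkey i x hx).mp hdvd).symm⟩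
  have hinj : Set.InjOn (fun i : ℕ => ((-(i : ZMod p)) * c).val) ↑S := by
    intro i hi j hj hij
    have h1 : (-(i : ZMod p)) * c = (-(j : ZMod p)) * c := by
      have h2 := congrArg (fun t : ℕ => (t : ZMod p)) hij
      simpa [ZMod.natCast_zmod_val] using h2
    have hc0 : c ≠ 0 := inv_ne_zero h30z
    have h3 : (i : ZMod p) = (j : ZMod p) := neg_inj.mp (mul_right_cancel₀ hc0 h1)
    exact cast_injOn_S p hp h13 i (Finset.mem_coe.mp hi) j (Finset.mem_coe.mp hj) h3
  have himcard : (S.image (fun i : ℕ => ((-(i : ZMod p)) * c).val)).card = 8 := by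
    rw [Finset.card_image_of_injOn hinj, S_card]
  have hsub : S.image (fun i : ℕ => ((-(i : ZMod p)) * c).val) ⊆ Finset.range p := by
    intro x hx
    simp only [Finset.mem_image] at hx
    obtain ⟨i, _, rfl⟩ := hx
    exact Finset.mem_range.mpr (ZMod.val_lt _)
  unfold phi3
  rw [hgood, Finset.card_sdiff_of_subset hsub, Finset.card_range, himcard]

lemma phi3_prime_pow_small (q : ℕ) (hq : phi3 q = q) (n : ℕ) : phi3 (q ^ n) = q ^ n := by
  cases n with
  | zero => simpa using phi3_one
  | succ n => rw [phi3_pow q (n + 1) (by omega), Nat.add_sub_cancel, hq, ← pow_succ]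

lemma phi3_prod (t : Finset ℕ) (g : ℕ → ℕ)
    (h : ∀ s ∈ t, ∀ u ∈ t, s ≠ u → Nat.Coprime (g s) (g u)) :
    phi3 (∏ s ∈ t, g s) = ∏ s ∈ t, phi3 (g s) := by
  induction t using Finset.induction_on with
  | empty => simpa using phi3_one
  | @insert a t0 ha ih =>
    rw [Finset.prod_insert ha, Finset.prod_insert ha,
      phi3_mul _ _ (Nat.Coprime.prod_right fun u hu =>
        h a (Finset.mem_insert_self a t0) u (Finset.mem_insert_of_mem hu)
          (by rintro rfl; exact ha hu)),
      ih fun s hs u hu hne =>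
        h s (Finset.mem_insert_of_mem hs) u (Finset.mem_insert_of_mem hu) hne]

theorem phi3_formula (m : ℕ) (hm : 1 < m)
    (k₁ k₂ k₃ k₄ : ℕ) (hk₄ : 1 ≤ k₄)
    (r : ℕ) (p k : ℕ → ℕ)
    (hp : ∀ s ∈ Finset.Icc 5 r, (p s).Prime ∧ 13 ≤ p s)
    (hk : ∀ s ∈ Finset.Icc 5 r, 1 ≤ k s)
    (hdist : ∀ s ∈ Finset.Icc 5 r, ∀ t ∈ Finset.Icc 5 r, p s = p t → s = t)
    (hfact : m = 2 ^ k₁ * 3 ^ k₂ * 5 ^ k₃ * 11 ^ k₄ *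
      ∏ s ∈ Finset.Icc 5 r, p s ^ k s) :
    phi3 m = 2 ^ k₁ * 3 ^ k₂ * 5 ^ k₃ * (11 ^ k₄ - 6 * 11 ^ (k₄ - 1)) *
      ∏ s ∈ Finset.Icc 5 r, (p s ^ k s - 8 * p s ^ (k s - 1)) := by
  subst hfact
  -- coprimality with the tail product
  have copQ : ∀ q : ℕ, q.Prime → q < 13 →
      Nat.Coprime q (∏ s ∈ Finset.Icc 5 r, p s ^ k s) := by
    intro q hq hlt
    refine Nat.Coprime.prod_right fun s hs => Nat.Coprime.pow_right _ ?_
    exact (Nat.coprime_primes hq (hp s hs).1).mpr (by have := (hp s hs).2; omega)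
  have hQ : phi3 (∏ s ∈ Finset.Icc 5 r, p s ^ k s)
      = ∏ s ∈ Finset.Icc 5 r, (p s ^ k s - 8 * p s ^ (k s - 1)) := by
    rw [phi3_prod _ _ (fun s hs u hu hne =>
      Nat.Coprime.pow _ _ ((Nat.coprime_primes (hp s hs).1 (hp u hu).1).mpr
        (fun he => hne (hdist s hs u hu he))))]
    apply Finset.prod_congr rfl
    intro s hs
    obtain ⟨hps, h13⟩ := hp s hs
    rw [phi3_pow _ _ (hk s hs), phi3_prime_large _ hps h13]
    have hks := hk s hs
    have hsplit : p s ^ k s = p s * p s ^ (k s - 1) := by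
      rw [← pow_succ']; congr 1; omega
    rw [hsplit, mul_comm (p s ^ (k s - 1)) (p s - 8), Nat.sub_mul]
  have h2 : phi3 (2 ^ k₁) = 2 ^ k₁ := phi3_prime_pow_small 2 (by decide) k₁
  have h3 : phi3 (3 ^ k₂) = 3 ^ k₂ := phi3_prime_pow_small 3 (by decide) k₂
  have h5 : phi3 (5 ^ k₃) = 5 ^ k₃ := phi3_prime_pow_small 5 (by decide) k₃
  have h11 : phi3 (11 ^ k₄) = 11 ^ k₄ - 6 * 11 ^ (k₄ - 1) := by
    rw [phi3_pow 11 k₄ hk₄, show phi3 11 = 5 by decide]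
    have hp11 : (11 : ℕ) ^ k₄ = 11 * 11 ^ (k₄ - 1) := by
      rw [← pow_succ']; congr 1; omega
    rw [hp11]
    generalize (11 : ℕ) ^ (k₄ - 1) = a
    omega
  have c23 : Nat.Coprime (2 ^ k₁) (3 ^ k₂) := Nat.Coprime.pow _ _ (by decide)
  have c25 : Nat.Coprime (2 ^ k₁) (5 ^ k₃) := Nat.Coprime.pow _ _ (by decide)
  have c35 : Nat.Coprime (3 ^ k₂) (5 ^ k₃) := Nat.Coprime.pow _ _ (by decide)
  have c2_11 : Nat.Coprime (2 ^ k₁) (11 ^ k₄) := Nat.Coprime.pow _ _ (by decide)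
  have c3_11 : Nat.Coprime (3 ^ k₂) (11 ^ k₄) := Nat.Coprime.pow _ _ (by decide)
  have c5_11 : Nat.Coprime (5 ^ k₃) (11 ^ k₄) := Nat.Coprime.pow _ _ (by decide)
  have c2Q := Nat.Coprime.pow_left k₁ (copQ 2 Nat.prime_two (by norm_num))
  have c3Q := Nat.Coprime.pow_left k₂ (copQ 3 Nat.prime_three (by norm_num))
  have c5Q := Nat.Coprime.pow_left k₃ (copQ 5 (by norm_num) (by norm_num))
  have c11Q := Nat.Coprime.pow_left k₄ (copQ 11 (by norm_num) (by norm_num))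
  rw [phi3_mul _ _ (Nat.Coprime.mul (Nat.Coprime.mul (Nat.Coprime.mul c2Q c3Q) c5Q) c11Q),
    phi3_mul _ _ (Nat.Coprime.mul (Nat.Coprime.mul c2_11 c3_11) c5_11),
    phi3_mul _ _ (Nat.Coprime.mul c25 c35),
    phi3_mul _ _ c23, h2, h3, h5, h11, hQ]
end

section
/- For every integer a > 1 there exists an integer n₀ such that for all integers n ≥ n₀: a·(7/6)·(11/5)·∏_{j=6}^{n+3} p_j/(p_j − 8) < n + 1. -/
set_option maxRecDepth 10000


/-- `p n` is the n-th prime, with `p 1 = 2`, `p 2 = 3`, etc. -/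
noncomputable def p (n : ℕ) : ℕ := Nat.nth Nat.Prime (n - 1)

namespace DensityAux

/-- the list of primes up to 461 -/
def L : List ℕ := [2, 3, 5, 7, 11, 13, 17, 19, 23, 29, 31, 37, 41, 43, 47, 53, 59, 61, 67,
  71, 73, 79, 83, 89, 97, 101, 103, 107, 109, 113, 127, 131, 137, 139, 149, 151, 157, 163,
  167, 173, 179, 181, 191, 193, 197, 199, 211, 223, 227, 229, 233, 239, 241, 251, 257, 263,
  269, 271, 277, 281, 283, 293, 307, 311, 313, 317, 331, 337, 347, 349, 353, 359, 367, 373,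
  379, 383, 389, 397, 401, 409, 419, 421, 431, 433, 439, 443, 449, 457, 461]

def Mn : ℕ := L.prod
def Tn : ℕ := (L.map (· - 1)).prod

lemma totient_list_prod : ∀ l : List ℕ, (∀ q ∈ l, q.Prime) → l.Pairwise (· ≠ ·) →
    Nat.totient l.prod = (l.map (· - 1)).prod := by
  intro l
  induction l with
  | nil => simp
  | cons q l ih =>
    intro hp hpw
    have hq : q.Prime := hp q List.mem_cons_self
    have hcop : Nat.Coprime q l.prod := by
      rw [Nat.coprime_list_prod_right_iff]
      intro r hr
      exact (Nat.coprime_primes hq (hp r (List.mem_cons_of_mem _ hr))).mpr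
        ((List.pairwise_cons.mp hpw).1 r hr)
    simp only [List.prod_cons, List.map_cons]
    rw [Nat.totient_mul hcop, Nat.totient_prime hq,
      ih (fun r hr => hp r (List.mem_cons_of_mem _ hr)) (List.pairwise_cons.mp hpw).2]

section
attribute [local instance] Nat.decidablePrime
lemma hL_prime : ∀ q ∈ L, q.Prime := by decide
end
lemma hL_pair : L.Pairwise (· ≠ ·) := by decide
lemma hM_tot : Nat.totient Mn = Tn := totient_list_prod L hL_prime hL_pair
lemma hM_pos : 0 < Mn := by decide
lemma hTM : 11 * Tn ≤ Mn := by decide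

/-- linear bound constant -/
def C0 : ℕ := 11 * (Mn + 1 + Tn)

open Nat.Prime in
lemma pi_linear (x : ℕ) : 11 * Nat.primeCounting' x ≤ x + C0 := by
  rcases le_or_gt x (Mn + 1) with h | h
  · have h1 : Nat.primeCounting' x ≤ x := Nat.count_le _
    have : x ≤ Mn + 1 := h
    simp only [C0]
    omega
  · obtain ⟨n, rfl⟩ : ∃ n, x = (Mn + 1) + n := ⟨x - (Mn + 1), by omega⟩
    have h1 := Nat.primeCounting'_add_le hM_pos.ne' (by omega : Mn < Mn + 1) n
    have h2 : 11 * (Tn * (n / Mn)) ≤ Mn * (n / Mn) := by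
      rw [← Nat.mul_assoc]
      exact Nat.mul_le_mul_right _ hTM
    have h3 : Mn * (n / Mn) ≤ n := Nat.mul_div_le n Mn
    have h4 : Nat.primeCounting' (Mn + 1) ≤ Mn + 1 := Nat.count_le _
    rw [hM_tot, Nat.mul_add, Nat.mul_one] at h1
    simp only [C0]
    omega

/-- threshold -/
def J : ℕ := C0 + 17

lemma J_ge : 17 ≤ J := by simp [J]

lemma p_ge_10j {j : ℕ} (hj : J ≤ j) : 10 * j ≤ p j := by
  have h1 : Nat.primeCounting' (Nat.nth Nat.Prime (j - 1)) = j - 1 :=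
    Nat.primeCounting'_nth_eq _
  have h2 := pi_linear (Nat.nth Nat.Prime (j - 1))
  rw [h1] at h2
  have hj' : C0 + 17 ≤ j := hj
  show 10 * j ≤ Nat.nth Nat.Prime (j - 1)
  omega

lemma p_ge_13 {j : ℕ} (hj : 6 ≤ j) : 13 ≤ p j := by
  have hc : Nat.count Nat.Prime 13 = 5 := by decide
  have h13 : Nat.nth Nat.Prime 5 = 13 := by
    have h := Nat.nth_count (p := Nat.Prime) (by norm_num : Nat.Prime 13)
    rwa [hc] at h
  have : Nat.nth Nat.Prime 5 ≤ Nat.nth Nat.Prime (j - 1) :=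
    (Nat.nth_le_nth Nat.infinite_setOf_prime).mpr (by omega)
  rw [h13] at this
  exact this

noncomputable def f (j : ℕ) : ℝ := (p j : ℝ) / ((p j : ℝ) - 8)

lemma f_bounds {j : ℕ} (hj : 6 ≤ j) : 0 ≤ f j ∧ f j ≤ 13 / 5 := by
  have h13 : (13 : ℝ) ≤ (p j : ℝ) := by exact_mod_cast p_ge_13 hj
  have hpos : (0 : ℝ) < (p j : ℝ) - 8 := by linarith
  unfold f
  constructor
  · positivity
  · rw [div_le_div_iff₀ hpos (by norm_num : (0:ℝ) < 5)]
    linarith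

lemma f_pow5 {j : ℕ} (hj : J ≤ j) :
    f j ^ 5 ≤ (j : ℝ) ^ 4 / ((j : ℝ) - 1) ^ 4 := by
  have hj6 : 6 ≤ j := le_trans (by have := J_ge; omega) hj
  have hj2 : (2 : ℝ) ≤ (j : ℝ) := by
    have h : 2 ≤ j := by omega
    exact_mod_cast h
  have h10 : (10 : ℝ) * (j : ℝ) ≤ (p j : ℝ) := by
    have h := p_ge_10j hj
    have h' : ((10 * j : ℕ) : ℝ) ≤ (p j : ℝ) := by exact_mod_cast h
    push_cast at h'
    linarith
  have h13 : (13 : ℝ) ≤ (p j : ℝ) := by exact_mod_cast p_ge_13 hj6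
  have hpos : (0 : ℝ) < (p j : ℝ) - 8 := by linarith
  have hpos2 : (0 : ℝ) < 10 * (j : ℝ) - 8 := by linarith
  have step1 : f j ≤ 10 * (j : ℝ) / (10 * (j : ℝ) - 8) := by
    unfold f
    rw [div_le_div_iff₀ hpos hpos2]
    nlinarith
  have hf0 : 0 ≤ f j := (f_bounds hj6).1
  have step2 : f j ^ 5 ≤ (10 * (j : ℝ) / (10 * (j : ℝ) - 8)) ^ 5 :=
    pow_le_pow_left₀ hf0 step1 5
  refine le_trans step2 ?_
  rw [div_pow, div_le_div_iff₀ (pow_pos hpos2 5) (pow_pos (by linarith : (0:ℝ) < (j:ℝ) - 1) 4)]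
  have key : (10 * (j:ℝ) - 8) ^ 5 * (j:ℝ) ^ 4 - (10 * (j:ℝ)) ^ 5 * ((j:ℝ) - 1) ^ 4 =
      32 * (1 + 29 * ((j:ℝ) - 1) + 356 * ((j:ℝ) - 1) ^ 2 + 2404 * ((j:ℝ) - 1) ^ 3 +
        6601 * ((j:ℝ) - 1) ^ 4 + 8525 * ((j:ℝ) - 1) ^ 5 + 5250 * ((j:ℝ) - 1) ^ 6 +
        1250 * ((j:ℝ) - 1) ^ 7) := by ring
  nlinarith [key, pow_nonneg (by linarith : (0:ℝ) ≤ (j:ℝ) - 1) 2,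
    pow_nonneg (by linarith : (0:ℝ) ≤ (j:ℝ) - 1) 3,
    pow_nonneg (by linarith : (0:ℝ) ≤ (j:ℝ) - 1) 4,
    pow_nonneg (by linarith : (0:ℝ) ≤ (j:ℝ) - 1) 5,
    pow_nonneg (by linarith : (0:ℝ) ≤ (j:ℝ) - 1) 6,
    pow_nonneg (by linarith : (0:ℝ) ≤ (j:ℝ) - 1) 7]

noncomputable def K : ℝ := (13 / 5 : ℝ) ^ (5 * J)

lemma K_pos : 0 < K := by unfold K; positivity

lemma K_def : (13 / 5 : ℝ) ^ (5 * J) = K := rfl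

attribute [irreducible] J K

lemma prod_nonneg' (m : ℕ) : 0 ≤ ∏ j ∈ Finset.Icc 6 m, f j :=
  Finset.prod_nonneg fun j hj => (f_bounds (Finset.mem_Icc.mp hj).1).1

lemma prod_bound : ∀ m : ℕ, J ≤ m →
    (∏ j ∈ Finset.Icc 6 m, f j) ^ 5 ≤ K * (m : ℝ) ^ 4 := by
  intro m hm
  induction m, hm using Nat.le_induction with
  | base =>
    have hcard : (Finset.Icc 6 J).card = J - 5 := by
      rw [Nat.card_Icc]; omega
    have hb : ∏ j ∈ Finset.Icc 6 J, f j ≤ (13 / 5 : ℝ) ^ (J - 5) := by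
      rw [← hcard, ← Finset.prod_const]
      exact Finset.prod_le_prod (fun j hj => (f_bounds (Finset.mem_Icc.mp hj).1).1)
        (fun j hj => (f_bounds (Finset.mem_Icc.mp hj).1).2)
    have hb2 : (13 / 5 : ℝ) ^ (J - 5) ≤ (13 / 5 : ℝ) ^ J :=
      pow_le_pow_right₀ (by norm_num) (by omega)
    have h1 : (∏ j ∈ Finset.Icc 6 J, f j) ^ 5 ≤ ((13 / 5 : ℝ) ^ J) ^ 5 :=
      pow_le_pow_left₀ (prod_nonneg' J) (le_trans hb hb2) 5
    rw [← pow_mul, mul_comm J 5] at h1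
    refine le_trans h1 ?_
    rw [K_def]
    have hJn : 1 ≤ J := le_trans (by norm_num) J_ge
    have hJ1 : (1 : ℝ) ≤ (J : ℝ) := by exact_mod_cast hJn
    have hJ2 : (1 : ℝ) ≤ (J : ℝ) ^ 2 := by nlinarith [hJ1]
    have hJ4 : (1 : ℝ) ≤ (J : ℝ) ^ 4 := by nlinarith [hJ2]
    nlinarith [K_pos, hJ4]
  | succ m hm ih =>
    have h6 : 6 ≤ m + 1 := by have := J_ge; omega
    rw [Finset.prod_Icc_succ_top h6, mul_pow]
    have hm0 : (0 : ℝ) < (m : ℝ) := by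
      exact_mod_cast Nat.cast_pos.mpr (by have := J_ge; omega)
    have hf5 : f (m + 1) ^ 5 ≤ ((m:ℝ) + 1) ^ 4 / (m:ℝ) ^ 4 := by
      have := f_pow5 (j := m + 1) (by omega)
      push_cast at this
      convert this using 3 <;> ring
    have hfn : (0 : ℝ) ≤ f (m + 1) ^ 5 :=
      pow_nonneg (f_bounds (by omega)).1 5
    have hstep : (∏ j ∈ Finset.Icc 6 m, f j) ^ 5 * f (m + 1) ^ 5 ≤
        (K * (m:ℝ) ^ 4) * (((m:ℝ) + 1) ^ 4 / (m:ℝ) ^ 4) := by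
      exact mul_le_mul ih hf5 hfn (mul_nonneg K_pos.le (by positivity))
    refine le_trans hstep ?_
    have : (K * (m:ℝ) ^ 4) * (((m:ℝ) + 1) ^ 4 / (m:ℝ) ^ 4) = K * ((m:ℝ) + 1) ^ 4 := by
      field_simp
    rw [this]
    push_cast
    exact le_rfl

end DensityAux

theorem density_dominated (a : ℤ) (ha : 1 < a) :
    ∃ n₀ : ℤ, ∀ n : ℕ, (n₀ : ℤ) ≤ n →
      (a : ℝ) * (7 / 6) * (11 / 5) *
          ∏ j ∈ Finset.Icc 6 (n + 3), (p j : ℝ) / ((p j : ℝ) - 8) <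
        (n : ℝ) + 1 := by
  classical
  open DensityAux in
  set A : ℝ := (a : ℝ) * (7 / 6) * (11 / 5) with hA
  have hA1 : (1 : ℝ) < A := by
    have : (2 : ℝ) ≤ (a : ℝ) := by exact_mod_cast ha
    rw [hA]; nlinarith
  have hA0 : (0 : ℝ) < A := lt_trans one_pos hA1
  refine ⟨max (⌈16 * A ^ 5 * K⌉ + 1) ((J : ℤ) + 1), ?_⟩
  intro n hn
  have hn1 : (⌈16 * A ^ 5 * K⌉ : ℤ) + 1 ≤ (n : ℤ) := le_trans (le_max_left _ _) hn
  have hn2 : (J : ℤ) + 1 ≤ (n : ℤ) := le_trans (le_max_right _ _) hn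
  have hnJ : J ≤ n := by exact_mod_cast (by omega : (J : ℤ) ≤ (n : ℤ))
  have hbig : 16 * A ^ 5 * K < (n : ℝ) + 1 := by
    have h1 : 16 * A ^ 5 * K ≤ (⌈16 * A ^ 5 * K⌉ : ℝ) := Int.le_ceil _
    have h2 : ((⌈16 * A ^ 5 * K⌉ : ℤ) : ℝ) ≤ (n : ℝ) - 1 := by
      exact_mod_cast (by omega : (⌈16 * A ^ 5 * K⌉ : ℤ) ≤ (n : ℤ) - 1)
    linarith
  set P : ℝ := ∏ j ∈ Finset.Icc 6 (n + 3), (p j : ℝ) / ((p j : ℝ) - 8) with hPdef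
  have hPf : P = ∏ j ∈ Finset.Icc 6 (n + 3), f j := rfl
  have hP0 : 0 ≤ P := hPf ▸ prod_nonneg' (n + 3)
  have hP5 : P ^ 5 ≤ K * ((n : ℝ) + 3) ^ 4 := by
    have := prod_bound (n + 3) (by omega)
    rw [← hPf] at this
    convert this using 3
    push_cast
    ring
  have hn1R : (1 : ℝ) ≤ (n : ℝ) := by
    have : 1 ≤ n := by omega
    exact_mod_cast this
  have h23 : ((n : ℝ) + 3) ^ 4 ≤ (2 * ((n : ℝ) + 1)) ^ 4 := by
    apply pow_le_pow_left₀ (by linarith) (by linarith)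
  have key : (A * P) ^ 5 < ((n : ℝ) + 1) ^ 5 := by
    have e1 : (A * P) ^ 5 = A ^ 5 * P ^ 5 := by ring
    have hA5 : (0 : ℝ) < A ^ 5 := by positivity
    have c1 : A ^ 5 * P ^ 5 ≤ A ^ 5 * (K * ((n : ℝ) + 3) ^ 4) :=
      mul_le_mul_of_nonneg_left hP5 (le_of_lt hA5)
    have c2 : A ^ 5 * (K * ((n : ℝ) + 3) ^ 4) ≤ A ^ 5 * (K * (2 * ((n : ℝ) + 1)) ^ 4) := by
      have := mul_le_mul_of_nonneg_left h23 (le_of_lt K_pos)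
      exact mul_le_mul_of_nonneg_left this (le_of_lt hA5)
    have e2 : A ^ 5 * (K * (2 * ((n : ℝ) + 1)) ^ 4) =
        (16 * A ^ 5 * K) * ((n : ℝ) + 1) ^ 4 := by ring
    have c3 : (16 * A ^ 5 * K) * ((n : ℝ) + 1) ^ 4 < ((n : ℝ) + 1) * ((n : ℝ) + 1) ^ 4 := by
      apply mul_lt_mul_of_pos_right hbig
      positivity
    calc (A * P) ^ 5 = A ^ 5 * P ^ 5 := e1
      _ ≤ A ^ 5 * (K * ((n : ℝ) + 3) ^ 4) := c1
      _ ≤ A ^ 5 * (K * (2 * ((n : ℝ) + 1)) ^ 4) := c2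
      _ = (16 * A ^ 5 * K) * ((n : ℝ) + 1) ^ 4 := e2
      _ < ((n : ℝ) + 1) * ((n : ℝ) + 1) ^ 4 := c3
      _ = ((n : ℝ) + 1) ^ 5 := by ring
  exact lt_of_pow_lt_pow_left₀ 5 (by linarith) key
end

section
/- The sequence (1/(n+1))·(7/6)·(11/5)·∏_{j=6}^{n+3} p_j/(p_j − 8) tends to 0 as n → ∞. -/
set_option maxRecDepth 4000

open Filter Real

lemma tot1 : Nat.totient 2 = 1 := by decide

lemma tot2 : Nat.totient 6 = 2 := by
  rw [show (6:ℕ) = 2 * 3 by norm_num, Nat.totient_mul (by norm_num),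
    tot1, Nat.totient_prime (by norm_num)]

lemma tot3 : Nat.totient 30 = 8 := by
  rw [show (30:ℕ) = 6 * 5 by norm_num, Nat.totient_mul (by norm_num),
    tot2, Nat.totient_prime (by norm_num)]

lemma tot4 : Nat.totient 210 = 48 := by
  rw [show (210:ℕ) = 30 * 7 by norm_num, Nat.totient_mul (by norm_num),
    tot3, Nat.totient_prime (by norm_num)]

lemma tot5 : Nat.totient 2310 = 480 := by
  rw [show (2310:ℕ) = 210 * 11 by norm_num, Nat.totient_mul (by norm_num),
    tot4, Nat.totient_prime (by norm_num)]

lemma tot6 : Nat.totient 30030 = 5760 := by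
  rw [show (30030:ℕ) = 2310 * 13 by norm_num, Nat.totient_mul (by norm_num),
    tot5, Nat.totient_prime (by norm_num)]

lemma tot7 : Nat.totient 510510 = 92160 := by
  rw [show (510510:ℕ) = 30030 * 17 by norm_num, Nat.totient_mul (by norm_num),
    tot6, Nat.totient_prime (by norm_num)]

lemma tot8 : Nat.totient 9699690 = 1658880 := by
  rw [show (9699690:ℕ) = 510510 * 19 by norm_num, Nat.totient_mul (by norm_num),
    tot7, Nat.totient_prime (by norm_num)]

lemma tot9 : Nat.totient 223092870 = 36495360 := by
  rw [show (223092870:ℕ) = 9699690 * 23 by norm_num, Nat.totient_mul (by norm_num),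
    tot8, Nat.totient_prime (by norm_num)]

lemma tot10 : Nat.totient 6469693230 = 1021870080 := by
  rw [show (6469693230:ℕ) = 223092870 * 29 by norm_num, Nat.totient_mul (by norm_num),
    tot9, Nat.totient_prime (by norm_num)]

lemma tot11 : Nat.totient 200560490130 = 30656102400 := by
  rw [show (200560490130:ℕ) = 6469693230 * 31 by norm_num, Nat.totient_mul (by norm_num),
    tot10, Nat.totient_prime (by norm_num)]

lemma tot12 : Nat.totient 7420738134810 = 1103619686400 := by
  rw [show (7420738134810:ℕ) = 200560490130 * 37 by norm_num, Nat.totient_mul (by norm_num),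
    tot11, Nat.totient_prime (by norm_num)]

lemma tot13 : Nat.totient 304250263527210 = 44144787456000 := by
  rw [show (304250263527210:ℕ) = 7420738134810 * 41 by norm_num, Nat.totient_mul (by norm_num),
    tot12, Nat.totient_prime (by norm_num)]

lemma tot14 : Nat.totient 13082761331670030 = 1854081073152000 := by
  rw [show (13082761331670030:ℕ) = 304250263527210 * 43 by norm_num, Nat.totient_mul (by norm_num),
    tot13, Nat.totient_prime (by norm_num)]

lemma tot15 : Nat.totient 614889782588491410 = 85287729364992000 := by
  rw [show (614889782588491410:ℕ) = 13082761331670030 * 47 by norm_num, Nat.totient_mul (by norm_num),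
    tot14, Nat.totient_prime (by norm_num)]

lemma tot16 : Nat.totient 32589158477190044730 = 4434961926979584000 := by
  rw [show (32589158477190044730:ℕ) = 614889782588491410 * 53 by norm_num, Nat.totient_mul (by norm_num),
    tot15, Nat.totient_prime (by norm_num)]

lemma tot17 : Nat.totient 1922760350154212639070 = 257227791764815872000 := by
  rw [show (1922760350154212639070:ℕ) = 32589158477190044730 * 59 by norm_num, Nat.totient_mul (by norm_num),
    tot16, Nat.totient_prime (by norm_num)]

lemma tot18 : Nat.totient 117288381359406970983270 = 15433667505888952320000 := by
  rw [show (117288381359406970983270:ℕ) = 1922760350154212639070 * 61 by norm_num, Nat.totient_mul (by norm_num),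
    tot17, Nat.totient_prime (by norm_num)]

lemma tot19 : Nat.totient 7858321551080267055879090 = 1018622055388670853120000 := by
  rw [show (7858321551080267055879090:ℕ) = 117288381359406970983270 * 67 by norm_num, Nat.totient_mul (by norm_num),
    tot18, Nat.totient_prime (by norm_num)]

lemma tot20 : Nat.totient 557940830126698960967415390 = 71303543877206959718400000 := by
  rw [show (557940830126698960967415390:ℕ) = 7858321551080267055879090 * 71 by norm_num, Nat.totient_mul (by norm_num),
    tot19, Nat.totient_prime (by norm_num)]

lemma tot21 : Nat.totient 40729680599249024150621323470 = 5133855159158901099724800000 := by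
  rw [show (40729680599249024150621323470:ℕ) = 557940830126698960967415390 * 73 by norm_num, Nat.totient_mul (by norm_num),
    tot20, Nat.totient_prime (by norm_num)]

lemma tot22 : Nat.totient 3217644767340672907899084554130 = 400440702414394285778534400000 := by
  rw [show (3217644767340672907899084554130:ℕ) = 40729680599249024150621323470 * 79 by norm_num, Nat.totient_mul (by norm_num),
    tot21, Nat.totient_prime (by norm_num)]

lemma tot23 : Nat.totient 267064515689275851355624017992790 = 32836137597980331433839820800000 := by
  rw [show (267064515689275851355624017992790:ℕ) = 3217644767340672907899084554130 * 83 by norm_num, Nat.totient_mul (by norm_num),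
    tot22, Nat.totient_prime (by norm_num)]

lemma tot24 : Nat.totient 23768741896345550770650537601358310 = 2889580108622269166177904230400000 := by
  rw [show (23768741896345550770650537601358310:ℕ) = 267064515689275851355624017992790 * 89 by norm_num, Nat.totient_mul (by norm_num),
    tot23, Nat.totient_prime (by norm_num)]

lemma tot25 : Nat.totient 2305567963945518424753102147331756070 = 277399690427737839953078806118400000 := by
  rw [show (2305567963945518424753102147331756070:ℕ) = 23768741896345550770650537601358310 * 97 by norm_num, Nat.totient_mul (by norm_num),
    tot24, Nat.totient_prime (by norm_num)]

lemma pi_linear_bound :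
    ∃ C : ℝ, 0 ≤ C ∧ ∀ x : ℕ, (Nat.primeCounting' x : ℝ) ≤ C + (121/1000) * x := by
  refine ⟨(Nat.primeCounting' (2305567963945518424753102147331756070+1) : ℝ) + 277399690427737839953078806118400000, by positivity, fun x => ?_⟩
  rcases le_or_gt x (2305567963945518424753102147331756070+1) with h | h
  · have h1 : (Nat.primeCounting' x : ℝ) ≤ (Nat.primeCounting' (2305567963945518424753102147331756070+1) : ℝ) :=
      Nat.cast_le.mpr (Nat.monotone_primeCounting' h)
    have h2 : (0:ℝ) ≤ (121/1000) * x :=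
      mul_nonneg (by norm_num) (Nat.cast_nonneg x)
    linarith
  · set n := x - (2305567963945518424753102147331756070+1) with hn
    have hx : x = (2305567963945518424753102147331756070+1) + n :=
      (Nat.add_sub_cancel' (le_of_lt h)).symm
    have key := Nat.primeCounting'_add_le
      (a := 2305567963945518424753102147331756070) (k := 2305567963945518424753102147331756070+1) (by norm_num) (by norm_num) n
    rw [tot25] at key
    have keyR : (Nat.primeCounting' x : ℝ) ≤ (Nat.primeCounting' (2305567963945518424753102147331756070+1) : ℝ) +
        (277399690427737839953078806118400000:ℝ) * (((n / 2305567963945518424753102147331756070 : ℕ):ℝ) + 1) := by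
      rw [hx]; exact_mod_cast key
    have hdiv : ((n / 2305567963945518424753102147331756070 : ℕ) : ℝ) ≤ (n:ℝ) / (2305567963945518424753102147331756070:ℝ) := Nat.cast_div_le
    have hr : (277399690427737839953078806118400000:ℝ) / (2305567963945518424753102147331756070:ℝ) ≤ 121/1000 := by
      rw [div_le_iff₀ (by norm_num)]; norm_num
    have h4 : (277399690427737839953078806118400000:ℝ) * ((n:ℝ)/(2305567963945518424753102147331756070:ℝ)) ≤ (121/1000) * n := by
      calc (277399690427737839953078806118400000:ℝ) * ((n:ℝ)/(2305567963945518424753102147331756070:ℝ)) = ((277399690427737839953078806118400000:ℝ)/(2305567963945518424753102147331756070:ℝ)) * n := by ring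
        _ ≤ (121/1000) * n := mul_le_mul_of_nonneg_right hr (Nat.cast_nonneg n)
    have hnx : (n:ℝ) ≤ (x:ℝ) := Nat.cast_le.mpr (hn ▸ Nat.sub_le x _)
    have h5 : (277399690427737839953078806118400000:ℝ) * (((n / 2305567963945518424753102147331756070 : ℕ):ℝ) + 1) ≤
        (277399690427737839953078806118400000:ℝ) + (121/1000) * x := by
      have := mul_le_mul_of_nonneg_left hdiv (show (0:ℝ) ≤ 277399690427737839953078806118400000 by norm_num)
      have h6 : (121/1000) * (n:ℝ) ≤ (121/1000) * (x:ℝ) := by linarith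
      linarith [h4]
    linarith


lemma p_linear : ∀ᶠ j : ℕ in atTop, (33:ℝ) * j ≤ 4 * (p j : ℝ) := by
  obtain ⟨C, hC0, hC⟩ := pi_linear_bound
  rw [eventually_atTop]
  refine ⟨⌈(3993 + 4000*C)/7⌉₊ + 1, fun j hj => ?_⟩
  have hj1 : 1 ≤ j := by omega
  set m := j - 1 with hm
  have hjm : j = m + 1 := by omega
  have h1 := hC (Nat.nth Nat.Prime m)
  rw [Nat.primeCounting'_nth_eq] at h1
  have hmge : ⌈(3993 + 4000*C)/7⌉₊ ≤ m := by omega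
  have hm' : (3993 + 4000*C)/7 ≤ (m:ℝ) :=
    le_trans (Nat.le_ceil _) (Nat.cast_le.mpr hmge)
  have hq : p j = Nat.nth Nat.Prime m := by simp only [p, hm]
  rw [hq, hjm]
  push_cast
  linarith

lemma rpow_key' {t : ℝ} (h0 : 0 ≤ t) (h : t ≤ 1/2) :
    1 + (64/65)*t ≤ (1+t) ^ (99/100:ℝ) := by
  rcases eq_or_lt_of_le h0 with rfl | ht
  · norm_num
  have h1 : (1+t) ^ (1/100:ℝ) ≤ 1 + (1/100)*t :=
    (rpow_one_add_lt_one_add_mul_self (by linarith) (ne_of_gt ht)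
      (by norm_num) (by norm_num)).le
  have hu : (0:ℝ) < (1+t) ^ (1/100:ℝ) := Real.rpow_pos_of_pos (by linarith) _
  have h2 : (1 + (64/65)*t) * ((1+t) ^ (1/100:ℝ)) ≤
      (1+t) ^ (99/100:ℝ) * ((1+t) ^ (1/100:ℝ)) := by
    have e : (1+t) ^ (99/100:ℝ) * ((1+t) ^ (1/100:ℝ)) = 1+t := by
      rw [← Real.rpow_add (by linarith)]; norm_num
    rw [e]
    calc (1 + (64/65)*t) * ((1+t) ^ (1/100:ℝ))
        ≤ (1 + (64/65)*t) * (1 + (1/100)*t) :=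
          mul_le_mul_of_nonneg_left h1 (by linarith)
      _ ≤ 1 + t := by nlinarith
  exact le_of_mul_le_mul_right h2 hu

lemma factor_bound : ∀ᶠ j : ℕ in atTop,
    (p j : ℝ)/((p j : ℝ) - 8) ≤ (((j:ℝ)+1)/(j:ℝ)) ^ (99/100:ℝ) := by
  filter_upwards [p_linear, eventually_ge_atTop 64] with j h33 h64
  have hj : (64:ℝ) ≤ (j:ℝ) := by exact_mod_cast h64
  have hjpos : (0:ℝ) < (j:ℝ) := by linarith
  have hp8 : (65/8:ℝ)*(j:ℝ) ≤ (p j:ℝ) - 8 := by linarith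
  have hppos : (0:ℝ) < (p j:ℝ) - 8 := by linarith
  have h1 : (p j:ℝ)/((p j:ℝ)-8) = 1 + 8/((p j:ℝ)-8) := by field_simp; ring
  have h2 : 8/((p j:ℝ)-8) ≤ (64/65)*(1/(j:ℝ)) := by
    have ha : 8/((p j:ℝ)-8) ≤ 8/((65/8:ℝ)*(j:ℝ)) :=
      div_le_div_of_nonneg_left (by norm_num) (by positivity) hp8
    have hb : 8/((65/8:ℝ)*(j:ℝ)) = (64/65)*(1/(j:ℝ)) := by
      field_simp
      ring
    rwa [hb] at ha
  have h3 : (1:ℝ)/(j:ℝ) ≤ 1/2 :=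
    one_div_le_one_div_of_le (by norm_num) (by linarith)
  have h4 := rpow_key' (by positivity) h3
  have e : (1:ℝ) + 1/(j:ℝ) = ((j:ℝ)+1)/(j:ℝ) := by field_simp
  rw [e] at h4
  rw [h1]
  linarith

lemma p_ge_13 {j : ℕ} (hj : 6 ≤ j) : 13 ≤ p j := by
  have h13 : Nat.nth Nat.Prime 5 = 13 := by
    have hc : Nat.count Nat.Prime 13 = 5 := by decide
    have := Nat.nth_count (p := Nat.Prime) (n := 13) (by norm_num)
    rwa [hc] at this
  calc 13 = Nat.nth Nat.Prime 5 := h13.symm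
    _ ≤ Nat.nth Nat.Prime (j-1) :=
        Nat.nth_monotone Nat.infinite_setOf_prime (by omega)
    _ = p j := rfl

lemma telescope (N : ℕ) (hN : 1 ≤ N) :
    ∀ M : ℕ, N ≤ M + 1 → ∏ j ∈ Finset.Icc N M, (((j:ℝ))+1)/(j:ℝ) = ((M:ℝ)+1)/(N:ℝ) := by
  intro M
  induction M with
  | zero =>
    intro h
    have : N = 1 := by omega
    subst this
    rw [Finset.Icc_eq_empty (by omega), Finset.prod_empty]
    norm_num
  | succ M ih =>
    intro h
    rcases eq_or_lt_of_le h with heq | hlt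
    · rw [Finset.Icc_eq_empty (by omega), Finset.prod_empty]
      rw [heq]
      push_cast
      rw [div_self (by positivity)]
    · have h' : N ≤ M + 1 := by omega
      rw [Finset.prod_Icc_succ_top h', ih h']
      have h1 : ((M:ℝ)+1) ≠ 0 := by positivity
      have h2 : ((N:ℝ)) ≠ 0 := by
        have : (0:ℝ) < (N:ℝ) := by exact_mod_cast Nat.pos_of_ne_zero (by omega)
        linarith
      push_cast
      field_simp

theorem density_ratio_tendsto_zero :
    Tendsto (fun n : ℕ =>
        (1 / ((n : ℝ) + 1)) * (7 / 6) * (11 / 5) *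
          ∏ j ∈ Finset.Icc 6 (n + 3), (p j : ℝ) / ((p j : ℝ) - 8))
      atTop (nhds 0) := by
  obtain ⟨N₀, hN₀⟩ := eventually_atTop.mp factor_bound
  set N := max N₀ 6 with hNdef
  have hN6 : 6 ≤ N := le_max_right _ _
  have hNN₀ : N₀ ≤ N := le_max_left _ _
  set D : ℝ := ∏ j ∈ Finset.Ico 6 N, (p j : ℝ)/((p j : ℝ) - 8) with hD
  have hfacpos : ∀ j : ℕ, 6 ≤ j → 0 < (p j : ℝ)/((p j:ℝ) - 8) := by
    intro j hj
    have h13 : (13:ℝ) ≤ (p j : ℝ) := by exact_mod_cast p_ge_13 hj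
    exact div_pos (by linarith) (by linarith)
  have hD0 : 0 ≤ D :=
    Finset.prod_nonneg fun j hj => (hfacpos j (Finset.mem_Ico.mp hj).1).le
  have hNpos : (0:ℝ) < (N:ℝ) := by
    have : (0:ℕ) < N := by omega
    exact_mod_cast this
  set B : ℝ := ((N:ℝ) ^ (99/100:ℝ))⁻¹ with hB
  have hB0 : 0 ≤ B := by positivity
  -- eventual bound
  have hbound : ∀ n : ℕ, N ≤ n →
      (1 / ((n : ℝ) + 1)) * (7 / 6) * (11 / 5) *
          ∏ j ∈ Finset.Icc 6 (n + 3), (p j : ℝ) / ((p j : ℝ) - 8)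
        ≤ (77/30) * D * B * 5 * ((n:ℝ)+4) ^ (-(1/100):ℝ) := by
    intro n hn
    have hn1 : (0:ℝ) < (n:ℝ) + 1 := by positivity
    have hx4 : (0:ℝ) < (n:ℝ) + 4 := by positivity
    -- split the product
    have hsplit : ∏ j ∈ Finset.Icc 6 (n + 3), (p j : ℝ) / ((p j : ℝ) - 8)
        = D * ∏ j ∈ Finset.Ico N (n+4), (p j : ℝ) / ((p j : ℝ) - 8) := by
      rw [← (show Finset.Ico 6 (n+4) = Finset.Icc 6 (n+3) from Finset.Ico_add_one_right_eq_Icc 6 (n+3)), hD,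
        Finset.prod_Ico_consecutive _ hN6 (by omega : N ≤ n + 4)]
    have htail1 : ∏ j ∈ Finset.Ico N (n+4), (p j : ℝ) / ((p j : ℝ) - 8)
        ≤ ∏ j ∈ Finset.Ico N (n+4), (((j:ℝ)+1)/(j:ℝ)) ^ (99/100:ℝ) := by
      apply Finset.prod_le_prod
      · intro j hj
        exact (hfacpos j (le_trans hN6 (Finset.mem_Ico.mp hj).1)).le
      · intro j hj
        exact hN₀ j (le_trans hNN₀ (Finset.mem_Ico.mp hj).1)
    have htail2 : ∏ j ∈ Finset.Ico N (n+4), (((j:ℝ)+1)/(j:ℝ)) ^ (99/100:ℝ)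
        = (((n:ℝ)+4)/(N:ℝ)) ^ (99/100:ℝ) := by
      rw [Real.finset_prod_rpow]
      · rw [(show Finset.Ico N (n+4) = Finset.Icc N (n+3) from Finset.Ico_add_one_right_eq_Icc N (n+3)), telescope N (by omega) (n+3) (by omega),
          show (((n+3:ℕ):ℝ)+1) = ((n:ℝ)+4) by push_cast; ring]
      · intro j hj
        have hj6 : 6 ≤ j := le_trans hN6 (Finset.mem_Ico.mp hj).1
        have : (0:ℝ) < (j:ℝ) := by
          have : (0:ℕ) < j := by omega
          exact_mod_cast this
        positivity
    have htail3 : ∏ j ∈ Finset.Ico N (n+4), (p j : ℝ) / ((p j : ℝ) - 8)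
        ≤ (((n:ℝ)+4)/(N:ℝ)) ^ (99/100:ℝ) := htail2 ▸ htail1
    have hmain : ∏ j ∈ Finset.Icc 6 (n + 3), (p j : ℝ) / ((p j : ℝ) - 8)
        ≤ D * (((n:ℝ)+4)/(N:ℝ)) ^ (99/100:ℝ) := by
      rw [hsplit]
      exact mul_le_mul_of_nonneg_left htail3 hD0
    have e1 : (((n:ℝ)+4)/(N:ℝ)) ^ (99/100:ℝ)
        = (((n:ℝ)+4) ^ (99/100:ℝ)) * B := by
      rw [Real.div_rpow (by linarith) (le_of_lt hNpos), hB, div_eq_mul_inv]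
    have e2 : ((n:ℝ)+4) ^ (99/100:ℝ)
        = (((n:ℝ)+4)) * (((n:ℝ)+4) ^ (-(1/100):ℝ)) := by
      have e3 : ((n:ℝ)+4) ^ ((1:ℝ) + -(1/100)) =
          ((n:ℝ)+4) ^ (1:ℝ) * ((n:ℝ)+4) ^ (-(1/100):ℝ) := Real.rpow_add hx4 _ _
      rw [Real.rpow_one] at e3
      rw [← e3]
      norm_num
    have hrn : (0:ℝ) ≤ ((n:ℝ)+4) ^ (-(1/100):ℝ) := Real.rpow_nonneg (by linarith) _
    have hfive : (1/((n:ℝ)+1)) * ((n:ℝ)+4) ≤ 5 := by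
      rw [div_mul_eq_mul_div, one_mul, div_le_iff₀ hn1]
      linarith
    calc (1 / ((n : ℝ) + 1)) * (7 / 6) * (11 / 5) *
          ∏ j ∈ Finset.Icc 6 (n + 3), (p j : ℝ) / ((p j : ℝ) - 8)
        ≤ (1 / ((n : ℝ) + 1)) * (7 / 6) * (11 / 5) *
          (D * (((n:ℝ)+4)/(N:ℝ)) ^ (99/100:ℝ)) := by
          apply mul_le_mul_of_nonneg_left hmain (by positivity)
      _ = (77/30) * D * B * ((1/((n:ℝ)+1)) * ((n:ℝ)+4)) *
          (((n:ℝ)+4) ^ (-(1/100):ℝ)) := by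
          rw [e1, e2]; ring
      _ ≤ (77/30) * D * B * 5 * (((n:ℝ)+4) ^ (-(1/100):ℝ)) := by
          apply mul_le_mul_of_nonneg_right _ hrn
          apply mul_le_mul_of_nonneg_left hfive (by positivity)
  -- squeeze
  apply squeeze_zero'
  · filter_upwards with n
    apply mul_nonneg
    apply mul_nonneg
    apply mul_nonneg
    · positivity
    · norm_num
    · norm_num
    · exact Finset.prod_nonneg fun j hj => (hfacpos j (Finset.mem_Icc.mp hj).1).le
  · filter_upwards [eventually_ge_atTop N] with n hn
    exact hbound n hn
  · have h1 : Tendsto (fun n : ℕ => ((n:ℝ)+4)) atTop atTop :=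
      tendsto_atTop_add_const_right _ 4 tendsto_natCast_atTop_atTop
    have h2 := (tendsto_rpow_neg_atTop (show (0:ℝ) < 1/100 by norm_num)).comp h1
    have h3 := h2.const_mul ((77/30) * D * B * 5)
    simpa using h3
end

section
/- The sequence (n+1)·(6/7)·(5/11)·∏_{j=6}^{n+3} (p_j − 8)/p_j tends to infinity as n → ∞. -/
open Filter
set_option maxRecDepth 2000

lemma tot_step (q m : ℕ) (hq : Nat.Prime q) (h : ¬ q ∣ m) :
    Nat.totient (q * m) = (q-1) * Nat.totient m := by
  rw [Nat.totient_mul (hq.coprime_iff_not_dvd.2 h), Nat.totient_prime hq]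

lemma tot_a : Nat.totient 232862364358497360900063316880507363070 = 27739969042773783995307880611840000000 := by
  have h25 : Nat.totient 101 = 100 := Nat.totient_prime (by norm_num)
  have h24 : Nat.totient 9797 = 9600 := by
    rw [show (9797:ℕ) = 97 * 101 by norm_num, tot_step 97 101 (by norm_num) (by norm_num), h25]
  have h23 : Nat.totient 871933 = 844800 := by
    rw [show (871933:ℕ) = 89 * 9797 by norm_num, tot_step 89 9797 (by norm_num) (by norm_num), h24]
  have h22 : Nat.totient 72370439 = 69273600 := by
    rw [show (72370439:ℕ) = 83 * 871933 by norm_num, tot_step 83 871933 (by norm_num) (by norm_num), h23]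
  have h21 : Nat.totient 5717264681 = 5403340800 := by
    rw [show (5717264681:ℕ) = 79 * 72370439 by norm_num, tot_step 79 72370439 (by norm_num) (by norm_num), h22]
  have h20 : Nat.totient 417360321713 = 389040537600 := by
    rw [show (417360321713:ℕ) = 73 * 5717264681 by norm_num, tot_step 73 5717264681 (by norm_num) (by norm_num), h21]
  have h19 : Nat.totient 29632582841623 = 27232837632000 := by
    rw [show (29632582841623:ℕ) = 71 * 417360321713 by norm_num, tot_step 71 417360321713 (by norm_num) (by norm_num), h20]
  have h18 : Nat.totient 1985383050388741 = 1797367283712000 := by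
    rw [show (1985383050388741:ℕ) = 67 * 29632582841623 by norm_num, tot_step 67 29632582841623 (by norm_num) (by norm_num), h19]
  have h17 : Nat.totient 121108366073713201 = 107842037022720000 := by
    rw [show (121108366073713201:ℕ) = 61 * 1985383050388741 by norm_num, tot_step 61 1985383050388741 (by norm_num) (by norm_num), h18]
  have h16 : Nat.totient 7145393598349078859 = 6254838147317760000 := by
    rw [show (7145393598349078859:ℕ) = 59 * 121108366073713201 by norm_num, tot_step 59 121108366073713201 (by norm_num) (by norm_num), h17]
  have h15 : Nat.totient 378705860712501179527 = 325251583660523520000 := by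
    rw [show (378705860712501179527:ℕ) = 53 * 7145393598349078859 by norm_num, tot_step 53 7145393598349078859 (by norm_num) (by norm_num), h16]
  have h14 : Nat.totient 17799175453487555437769 = 14961572848384081920000 := by
    rw [show (17799175453487555437769:ℕ) = 47 * 378705860712501179527 by norm_num, tot_step 47 378705860712501179527 (by norm_num) (by norm_num), h15]
  have h13 : Nat.totient 765364544499964883824067 = 628386059632131440640000 := by
    rw [show (765364544499964883824067:ℕ) = 43 * 17799175453487555437769 by norm_num, tot_step 43 17799175453487555437769 (by norm_num) (by norm_num), h14]
  have h12 : Nat.totient 31379946324498560236786747 = 25135442385285257625600000 := by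
    rw [show (31379946324498560236786747:ℕ) = 41 * 765364544499964883824067 by norm_num, tot_step 41 765364544499964883824067 (by norm_num) (by norm_num), h13]
  have h11 : Nat.totient 1161058014006446728761109639 = 904875925870269274521600000 := by
    rw [show (1161058014006446728761109639:ℕ) = 37 * 31379946324498560236786747 by norm_num, tot_step 37 31379946324498560236786747 (by norm_num) (by norm_num), h12]
  have h10 : Nat.totient 35992798434199848591594398809 = 27146277776108078235648000000 := by
    rw [show (35992798434199848591594398809:ℕ) = 31 * 1161058014006446728761109639 by norm_num, tot_step 31 1161058014006446728761109639 (by norm_num) (by norm_num), h11]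
  have h9 : Nat.totient 1043791154591795609156237565461 = 760095777731026190598144000000 := by
    rw [show (1043791154591795609156237565461:ℕ) = 29 * 35992798434199848591594398809 by norm_num, tot_step 29 35992798434199848591594398809 (by norm_num) (by norm_num), h10]
  have h8 : Nat.totient 24007196555611299010593464005603 = 16722107110082576193159168000000 := by
    rw [show (24007196555611299010593464005603:ℕ) = 23 * 1043791154591795609156237565461 by norm_num, tot_step 23 1043791154591795609156237565461 (by norm_num) (by norm_num), h9]
  have h7 : Nat.totient 456136734556614681201275816106457 = 300997927981486371476865024000000 := by
    rw [show (456136734556614681201275816106457:ℕ) = 19 * 24007196555611299010593464005603 by norm_num, tot_step 19 24007196555611299010593464005603 (by norm_num) (by norm_num), h8]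
  have h6 : Nat.totient 7754324487462449580421688873809769 = 4815966847703781943629840384000000 := by
    rw [show (7754324487462449580421688873809769:ℕ) = 17 * 456136734556614681201275816106457 by norm_num, tot_step 17 456136734556614681201275816106457 (by norm_num) (by norm_num), h7]
  have h5 : Nat.totient 100806218337011844545481955359526997 = 57791602172445383323558084608000000 := by
    rw [show (100806218337011844545481955359526997:ℕ) = 13 * 7754324487462449580421688873809769 by norm_num, tot_step 13 7754324487462449580421688873809769 (by norm_num) (by norm_num), h6]
  have h4 : Nat.totient 1108868401707130290000301508954796967 = 577916021724453833235580846080000000 := by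
    rw [show (1108868401707130290000301508954796967:ℕ) = 11 * 100806218337011844545481955359526997 by norm_num, tot_step 11 100806218337011844545481955359526997 (by norm_num) (by norm_num), h5]
  have h3 : Nat.totient 7762078811949912030002110562683578769 = 3467496130346722999413485076480000000 := by
    rw [show (7762078811949912030002110562683578769:ℕ) = 7 * 1108868401707130290000301508954796967 by norm_num, tot_step 7 1108868401707130290000301508954796967 (by norm_num) (by norm_num), h4]
  have h2 : Nat.totient 38810394059749560150010552813417893845 = 13869984521386891997653940305920000000 := by
    rw [show (38810394059749560150010552813417893845:ℕ) = 5 * 7762078811949912030002110562683578769 by norm_num, tot_step 5 7762078811949912030002110562683578769 (by norm_num) (by norm_num), h3]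
  have h1 : Nat.totient 116431182179248680450031658440253681535 = 27739969042773783995307880611840000000 := by
    rw [show (116431182179248680450031658440253681535:ℕ) = 3 * 38810394059749560150010552813417893845 by norm_num, tot_step 3 38810394059749560150010552813417893845 (by norm_num) (by norm_num), h2]
  have hfin : Nat.totient 232862364358497360900063316880507363070 = 27739969042773783995307880611840000000 := by
    rw [show (232862364358497360900063316880507363070:ℕ) = 2 * 116431182179248680450031658440253681535 by norm_num, tot_step 2 116431182179248680450031658440253681535 (by norm_num) (by norm_num), h1]
  exact hfin

lemma density : ∃ C : ℝ, 0 ≤ C ∧ ∀ x : ℕ, (Nat.primeCounting' x : ℝ) ≤ C + (239/2000) * x := by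
  obtain ⟨A, hA⟩ : ∃ a : ℕ, a = 232862364358497360900063316880507363070 := ⟨_, rfl⟩
  obtain ⟨T, hT⟩ : ∃ t : ℕ, t = 27739969042773783995307880611840000000 := ⟨_, rfl⟩
  have htot : Nat.totient A = T := by rw [hA, hT]; exact tot_a
  refine ⟨(Nat.primeCounting' (A+1) : ℝ) + T, add_nonneg (Nat.cast_nonneg _) (Nat.cast_nonneg _), fun x => ?_⟩
  rcases le_or_gt x (A+1) with h | h
  · have hmono := Nat.monotone_primeCounting' h
    have : (Nat.primeCounting' x : ℝ) ≤ (Nat.primeCounting' (A+1) : ℝ) := by exact_mod_cast hmono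
    have hx : (0:ℝ) ≤ x := Nat.cast_nonneg x
    have hT0 : (0:ℝ) ≤ (T:ℝ) := Nat.cast_nonneg T
    linarith
  · have hposA : 0 < A := by rw [hA]; norm_num
    obtain ⟨n, hn⟩ : ∃ n : ℕ, n = x - (A+1) := ⟨_, rfl⟩
    have hx : x = (A+1) + n := by omega
    have hb := Nat.primeCounting'_add_le (a := A) (k := A+1) (by rw [hA]; norm_num) (by omega) n
    rw [htot] at hb
    rw [hx]
    have hb' : (Nat.primeCounting' ((A+1)+n) : ℝ) ≤ (Nat.primeCounting' (A+1) : ℝ) + (T:ℝ) * (((n / A : ℕ):ℝ) + 1) := by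
      exact_mod_cast hb
    have hdiv : ((n / A : ℕ) : ℝ) ≤ (n:ℝ) / (A:ℝ) := Nat.cast_div_le
    have hAn : (0:ℝ) < (A:ℝ) := by rw [hA]; norm_num
    have hfrac : (T:ℝ) * ((n:ℝ)/(A:ℝ)) ≤ (239/2000) * n := by
      have hn0 : (0:ℝ) ≤ (n:ℝ) := Nat.cast_nonneg n
      have hTA : (T:ℝ) * 2000 ≤ 239 * (A:ℝ) := by rw [hA, hT]; norm_num
      rw [mul_div_assoc', div_le_iff₀ hAn]
      nlinarith [mul_le_mul_of_nonneg_right hTA hn0]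
    have hnx : (n:ℝ) ≤ ((A+1)+n : ℕ) := by push_cast; linarith [Nat.cast_nonneg (α := ℝ) A]
    have hT0 : (0:ℝ) ≤ (T:ℝ) := Nat.cast_nonneg T
    linarith [mul_le_mul_of_nonneg_left hdiv hT0, hfrac, hb', hnx]

lemma factor {P : ℝ} (hP : 2000 ≤ P) : Real.exp (-((201/25) * (1/P))) ≤ (P - 8)/P := by
  have hP0 : (0:ℝ) < P := by linarith
  have h1 : (201/25) * (1/P) + 1 ≤ Real.exp ((201/25) * (1/P)) := Real.add_one_le_exp _
  have hE : (0:ℝ) < Real.exp ((201/25) * (1/P)) := Real.exp_pos _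
  have h2 : 1 ≤ (P - 8)/P * ((201/25) * (1/P) + 1) := by
    have key : (P - 8)/P * ((201/25) * (1/P) + 1) - 1 = (P - 1608)/(25*P^2) := by
      field_simp; ring
    nlinarith [div_nonneg (by linarith : (0:ℝ) ≤ P - 1608) (by positivity : (0:ℝ) ≤ 25*P^2)]
  have h3 : 1 ≤ (P - 8)/P * Real.exp ((201/25) * (1/P)) := by
    have hnn : (0:ℝ) ≤ (P-8)/P := div_nonneg (by linarith) hP0.le
    nlinarith
  rw [Real.exp_neg]
  rw [inv_le_iff_one_le_mul₀ hE]
  linarith [h3]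

lemma p13 : ∀ j, 6 ≤ j → 13 ≤ p j := by
  intro j hj
  have h5 : Nat.nth Nat.Prime 5 = 13 := by
    have : Nat.count Nat.Prime 13 = 5 := by decide
    rw [← this]; exact Nat.nth_count (by norm_num)
  have := (Nat.nth_le_nth (p := Nat.Prime) Nat.infinite_setOf_prime (k := 5) (n := j-1)).2 (by omega)
  unfold p; omega

lemma pj1 : ∀ j, 1 ≤ j → j + 1 ≤ p j := by
  intro j hj
  have := Nat.add_two_le_nth_prime (j - 1)
  unfold p; omega

lemma pc_p (j : ℕ) : Nat.primeCounting' (p j) = j - 1 :=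
  Nat.primeCounting'_nth_eq (j-1)

lemma harm : ∀ (K : ℕ), 1 ≤ K → ∀ m, ∑ j ∈ Finset.Ioc K m, (1:ℝ)/j ≤ Real.log m := by
  intro K hK m
  induction m with
  | zero => simp
  | succ m ih =>
    rcases le_or_gt (m+1) K with h | h
    · rw [Finset.Ioc_eq_empty (by omega)]
      push_cast; simp only [Finset.sum_empty]
      exact Real.log_nonneg (by linarith [Nat.cast_nonneg (α:=ℝ) m])
    · have hm : 1 ≤ m := by omega
      rw [Finset.sum_Ioc_succ_top (by omega : K ≤ m)]
      have key : (1:ℝ)/(m+1) ≤ Real.log (m+1) - Real.log m := by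
        have hpos : (0:ℝ) < (m:ℝ)/(m+1) := by positivity
        have := Real.log_le_sub_one_of_pos hpos
        rw [Real.log_div (by positivity) (by positivity)] at this
        have h2 : Real.log m - Real.log (m+1) ≤ (m:ℝ)/(m+1) - 1 := this
        have heq : (m:ℝ)/(m+1) - 1 = -(1/(m+1)) := by field_simp; ring
        linarith [heq ▸ h2]
      push_cast
      push_cast at ih
      linarith

theorem reciprocal_density_tendsto_atTop :
    Tendsto (fun n : ℕ =>
        ((n : ℝ) + 1) * (6 / 7) * (5 / 11) *
          ∏ j ∈ Finset.Icc 6 (n + 3), ((p j : ℝ) - 8) / (p j : ℝ))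
      atTop atTop := by
  obtain ⟨C, hC0, hC⟩ := density
  obtain ⟨K0, hK0⟩ := exists_nat_ge (240*(C+1))
  obtain ⟨K, hKdef⟩ : ∃ K : ℕ, K = max K0 2000 := ⟨_, rfl⟩
  have hK2000 : 2000 ≤ K := hKdef ▸ le_max_right _ _
  have hKK0 : K0 ≤ K := hKdef ▸ le_max_left _ _
  -- pointwise facts for j > K
  have hppos : ∀ j, 6 ≤ j → (0:ℝ) < (p j : ℝ) := by
    intro j hj
    have := p13 j hj
    have : (13:ℝ) ≤ (p j : ℝ) := by exact_mod_cast this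
    linarith
  have hfpos : ∀ j, 6 ≤ j → (0:ℝ) < ((p j : ℝ) - 8) / (p j : ℝ) := by
    intro j hj
    have h13 : (13:ℝ) ≤ (p j : ℝ) := by exact_mod_cast p13 j hj
    exact div_pos (by linarith) (by linarith)
  have hp2000 : ∀ j, K < j → (2000:ℝ) ≤ (p j : ℝ) := by
    intro j hj
    have := pj1 j (by omega)
    have h : 2000 ≤ p j := by omega
    exact_mod_cast h
  have hpj : ∀ j, K < j → (1:ℝ)/(p j : ℝ) ≤ 3/(25*(j:ℝ)) := by
    intro j hj
    have hj1 : 1 ≤ j := by omega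
    have h1 : (Nat.primeCounting' (p j) : ℝ) ≤ C + (239/2000) * (p j : ℝ) := hC _
    rw [pc_p j] at h1
    have hcast : ((j - 1 : ℕ):ℝ) = (j:ℝ) - 1 := by
      rw [Nat.cast_sub hj1, Nat.cast_one]
    rw [hcast] at h1
    have hjK : (240*(C+1):ℝ) ≤ (j:ℝ) := by
      have : (K0:ℝ) ≤ (j:ℝ) := by exact_mod_cast (by omega : K0 ≤ j)
      linarith
    have hkey : 25*(j:ℝ) ≤ 3*(p j : ℝ) := by linarith
    have hj0 : (0:ℝ) < (j:ℝ) := by exact_mod_cast (by omega : 0 < j)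
    have hpj0 : (0:ℝ) < (p j : ℝ) := hppos j (by omega)
    rw [div_le_div_iff₀ hpj0 (by positivity)]
    linarith
  have hsum : ∀ m : ℕ, ∑ j ∈ Finset.Ioc K m, (1:ℝ)/(p j : ℝ) ≤ (3/25) * Real.log m := by
    intro m
    calc ∑ j ∈ Finset.Ioc K m, (1:ℝ)/(p j : ℝ)
        ≤ ∑ j ∈ Finset.Ioc K m, 3/(25*(j:ℝ)) :=
          Finset.sum_le_sum (fun j hj => hpj j (Finset.mem_Ioc.1 hj).1)
      _ = (3/25) * ∑ j ∈ Finset.Ioc K m, (1:ℝ)/j := by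
          rw [Finset.mul_sum]; exact Finset.sum_congr rfl (fun j _ => by ring)
      _ ≤ (3/25) * Real.log m := by
          have := harm K (by omega) m; linarith
  -- constants
  obtain ⟨c0, hc0def⟩ : ∃ c0 : ℝ, c0 = ∏ j ∈ Finset.Ioc 5 K, ((p j : ℝ) - 8) / (p j : ℝ) := ⟨_, rfl⟩
  have hc0 : 0 < c0 := by
    rw [hc0def]
    exact Finset.prod_pos (fun j hj => hfpos j (by have := (Finset.mem_Ioc.1 hj).1; omega))
  -- main eventual bound
  have key : ∀ n : ℕ, K ≤ n → (10/77*c0) * ((n:ℝ)+3)^((22:ℝ)/625) ≤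
      ((n : ℝ) + 1) * (6 / 7) * (5 / 11) *
          ∏ j ∈ Finset.Icc 6 (n + 3), ((p j : ℝ) - 8) / (p j : ℝ) := by
    intro n hn
    have hKm : K ≤ n + 3 := by omega
    have hsplit : (∏ j ∈ Finset.Icc 6 (n + 3), ((p j : ℝ) - 8) / (p j : ℝ))
        = c0 * ∏ j ∈ Finset.Ioc K (n+3), ((p j : ℝ) - 8) / (p j : ℝ) := by
      rw [hc0def, Finset.prod_Ioc_consecutive _ (by omega : 5 ≤ K) hKm,
        show Finset.Icc 6 (n+3) = Finset.Ioc 5 (n+3) from Finset.Icc_add_one_left_eq_Ioc 5 (n+3)]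
    have hm0 : (0:ℝ) < ((n+3:ℕ):ℝ) := by positivity
    have htail : ((n+3:ℕ):ℝ)^(-(603/625):ℝ) ≤ ∏ j ∈ Finset.Ioc K (n+3), ((p j : ℝ) - 8) / (p j : ℝ) := by
      have e1 : ((n+3:ℕ):ℝ)^(-(603/625):ℝ) = Real.exp (Real.log ((n+3:ℕ):ℝ) * (-(603/625))) :=
        Real.rpow_def_of_pos hm0 _
      have e2 : Real.exp (Real.log ((n+3:ℕ):ℝ) * (-(603/625)))
          ≤ Real.exp (-((201/25) * ∑ j ∈ Finset.Ioc K (n+3), (1:ℝ)/(p j : ℝ))) := by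
        apply Real.exp_le_exp.2
        have := hsum (n+3)
        nlinarith [this]
      have e3 : Real.exp (-((201/25) * ∑ j ∈ Finset.Ioc K (n+3), (1:ℝ)/(p j : ℝ)))
          = ∏ j ∈ Finset.Ioc K (n+3), Real.exp (-((201/25) * ((1:ℝ)/(p j : ℝ)))) := by
        rw [← Real.exp_sum]
        congr 1
        rw [Finset.sum_neg_distrib, Finset.mul_sum]
      have e4 : ∏ j ∈ Finset.Ioc K (n+3), Real.exp (-((201/25) * ((1:ℝ)/(p j : ℝ))))
          ≤ ∏ j ∈ Finset.Ioc K (n+3), ((p j : ℝ) - 8) / (p j : ℝ) :=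
        Finset.prod_le_prod (fun j _ => (Real.exp_pos _).le)
          (fun j hj => factor (hp2000 j (Finset.mem_Ioc.1 hj).1))
      rw [e1]
      calc Real.exp (Real.log ((n+3:ℕ):ℝ) * (-(603/625))) ≤ _ := e2
        _ = _ := e3
        _ ≤ _ := e4
    -- combine
    rw [hsplit]
    have hxpow : ((n+3:ℕ):ℝ) * ((n+3:ℕ):ℝ)^(-(603/625):ℝ) = ((n+3:ℕ):ℝ)^((22:ℝ)/625) := by
      rw [show ((22:ℝ)/625) = 1 + (-(603/625)) by norm_num, Real.rpow_add hm0, Real.rpow_one]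
    have hx3 : ((n+3:ℕ):ℝ) ≤ 3*((n:ℝ)+1) := by push_cast; linarith [Nat.cast_nonneg (α:=ℝ) n]
    have hmul : ((n+3:ℕ):ℝ) * ((n+3:ℕ):ℝ)^(-(603/625):ℝ)
        ≤ (3*((n:ℝ)+1)) * ∏ j ∈ Finset.Ioc K (n+3), ((p j : ℝ) - 8) / (p j : ℝ) :=
      mul_le_mul hx3 htail (Real.rpow_nonneg hm0.le _) (by positivity)
    have hcast2 : ((n:ℝ)+3) = ((n+3:ℕ):ℝ) := by push_cast; ring
    rw [hcast2]
    calc (10/77*c0) * ((n+3:ℕ):ℝ)^((22:ℝ)/625)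
        = (10/77*c0) * (((n+3:ℕ):ℝ) * ((n+3:ℕ):ℝ)^(-(603/625):ℝ)) := by rw [hxpow]
      _ ≤ (10/77*c0) * ((3*((n:ℝ)+1)) * ∏ j ∈ Finset.Ioc K (n+3), ((p j : ℝ) - 8) / (p j : ℝ)) :=
          mul_le_mul_of_nonneg_left hmul (by positivity)
      _ = ((n : ℝ) + 1) * (6 / 7) * (5 / 11) *
          (c0 * ∏ j ∈ Finset.Ioc K (n+3), ((p j : ℝ) - 8) / (p j : ℝ)) := by ring
  have hgrow : Tendsto (fun n : ℕ => ((10:ℝ)/77*c0) * ((n:ℝ)+3)^((22:ℝ)/625)) atTop atTop := by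
    apply Tendsto.const_mul_atTop (by positivity : (0:ℝ) < 10/77*c0)
    exact (tendsto_rpow_atTop (by norm_num)).comp
      (tendsto_atTop_add_const_right _ 3 tendsto_natCast_atTop_atTop)
  exact tendsto_atTop_mono' atTop (eventually_atTop.2 ⟨K, key⟩) hgrow
end
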